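/- For the infinite family of words w_n = (snd(P,Q,cons) · rcv(P,Q,cons))^n · snd(P,Q,nil) · rcv(P,Q,nil) · snd(Q,P,ack) · rcv(Q,P,ack), every w_n is complete, channel-compliant, half-duplex, 1-bounded, and 1-synchronisable, yet the word u_n = (snd(P,Q,cons))^n · snd(P,Q,nil) · (rcv(P,Q,cons))^n · rcv(P,Q,nil) · snd(Q,P,ack) · rcv(Q,P,ack), which induces the same MSC, is not n-bounded for n ≥ 1 but is still half-duplex. -/

import Mathlib

/-- Events: `snd P Q m` is process `P` sending message `m` to `Q`;
    `rcv P Q m` is process `Q` receiving message `m` from `P`. -/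
inductive Ev where
  | snd : ℕ → ℕ → ℕ → Ev
  | rcv : ℕ → ℕ → ℕ → Ev
deriving DecidableEq

/-- Message values of send events on channel (P,Q) in w. -/
def sends (w : List Ev) (P Q : ℕ) : List ℕ :=
  w.filterMap fun e => match e with
    | .snd p q m => if p = P ∧ q = Q then some m else none
    | _ => none

/-- Message values of receive events on channel (P,Q) in w. -/
def recvs (w : List Ev) (P Q : ℕ) : List ℕ :=
  w.filterMap fun e => match e with
    | .rcv p q m => if p = P ∧ q = Q then some m else none
    | _ => none

def channelCompliant (w : List Ev) : Prop :=
  ∀ u, u <+: w → ∀ P Q, recvs u P Q <+: sends u P Q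

def complete (w : List Ev) : Prop :=
  ∀ P Q, sends w P Q = recvs w P Q

def bounded (B : ℕ) (w : List Ev) : Prop :=
  ∀ u, u <+: w → ∀ P Q, (sends u P Q).length ≤ (recvs u P Q).length + B

def halfDuplex (w : List Ev) : Prop :=
  ∀ u, u <+: w → ∀ P Q,
    sends u P Q = recvs u P Q ∨ sends u Q P = recvs u Q P

/-- Send at position i on channel (P,Q) is matched by receive at position j. -/
def Matches (w : List Ev) (P Q i j : ℕ) : Prop :=
  i < j ∧ j < w.length ∧
  (∃ m, w[i]? = some (.snd P Q m) ∧ w[j]? = some (.rcv P Q m)) ∧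
  sends (w.take (i+1)) P Q = recvs (w.take (j+1)) P Q

def IsSendAt (w : List Ev) (P Q i : ℕ) : Prop := ∃ m, w[i]? = some (Ev.snd P Q m)
def IsRcvAt (w : List Ev) (P Q i : ℕ) : Prop := ∃ m, w[i]? = some (Ev.rcv P Q m)
def MatchedAt (w : List Ev) (P Q i : ℕ) : Prop := ∃ j, Matches w P Q i j

/-- The process performing the event. -/
def actor : Ev → ℕ
  | .snd p _ _ => p
  | .rcv _ q _ => q

/-- Projection of a word onto the events of process X. -/
def proj (w : List Ev) (X : ℕ) : List Ev := w.filter (fun e => actor e == X)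

/-- Two words induce the same MSC (same per-process orders; with FIFO matching,
    this determines the matching). -/
def sameMSC (w v : List Ev) : Prop := ∀ X, proj w X = proj v X

/-- Existentially B-bounded: some linearisation of msc(w) is B-bounded. -/
def existBounded (B : ℕ) (w : List Ev) : Prop :=
  ∃ v, channelCompliant v ∧ sameMSC w v ∧ bounded B v

def isSnd : Ev → Prop
  | .snd _ _ _ => True
  | _ => False

def isRcv : Ev → Prop
  | .rcv _ _ _ => True
  | _ => False

/-- Positions i and j lie in the same block of the block decomposition. -/
def SameBlock (blocks : List (List Ev)) (i j : ℕ) : Prop :=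
  ∃ t, ((blocks.take t).flatten).length ≤ i ∧ j < ((blocks.take (t+1)).flatten).length

/-- w is k-synchronisable: some linearisation of msc(w) splits into blocks of
    at most k sends followed by at most k receives, with matched pairs co-located. -/
def kSynchronisable (k : ℕ) (w : List Ev) : Prop :=
  ∃ blocks : List (List Ev),
    channelCompliant blocks.flatten ∧ sameMSC w blocks.flatten ∧
    (∀ b ∈ blocks, ∃ s r, b = s ++ r ∧ s.length ≤ k ∧ r.length ≤ k ∧
      (∀ e ∈ s, isSnd e) ∧ (∀ e ∈ r, isRcv e)) ∧
    (∀ P Q i j, Matches blocks.flatten P Q i j → SameBlock blocks i j)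

/-- One step of the indistinguishability relation ∼. -/
inductive Sim1 : List Ev → List Ev → Prop
  | ss (u v : List Ev) (P Q R S m m' : ℕ) (h : P ≠ R) :
      Sim1 (u ++ Ev.snd P Q m :: Ev.snd R S m' :: v)
           (u ++ Ev.snd R S m' :: Ev.snd P Q m :: v)
  | rr (u v : List Ev) (P Q R S m m' : ℕ) (h : Q ≠ S) :
      Sim1 (u ++ Ev.rcv P Q m :: Ev.rcv R S m' :: v)
           (u ++ Ev.rcv R S m' :: Ev.rcv P Q m :: v)
  | sr (u v : List Ev) (P Q R S m m' : ℕ) (h1 : P ≠ S) (h2 : P ≠ R ∨ Q ≠ S) :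
      Sim1 (u ++ Ev.snd P Q m :: Ev.rcv R S m' :: v)
           (u ++ Ev.rcv R S m' :: Ev.snd P Q m :: v)
  | srSame (u v : List Ev) (P Q m m' : ℕ)
      (h : (recvs u P Q).length < (sends u P Q).length) :
      Sim1 (u ++ Ev.snd P Q m :: Ev.rcv P Q m' :: v)
           (u ++ Ev.rcv P Q m' :: Ev.snd P Q m :: v)

/-- The indistinguishability relation ∼ (finitely many swaps). -/
def Sim : List Ev → List Ev → Prop := Relation.ReflTransGen Sim1


lemma sends_nil (P Q : ℕ) : sends [] P Q = [] := rfl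

lemma recvs_nil (P Q : ℕ) : recvs [] P Q = [] := rfl

lemma sends_cons_snd (p q m P Q : ℕ) (l : List Ev) :
    sends (Ev.snd p q m :: l) P Q =
      if p = P ∧ q = Q then m :: sends l P Q else sends l P Q := by
  simp only [sends, List.filterMap_cons]
  split_ifs <;> simp_all

lemma sends_cons_rcv (p q m P Q : ℕ) (l : List Ev) :
    sends (Ev.rcv p q m :: l) P Q = sends l P Q := by
  simp [sends, List.filterMap_cons]

lemma recvs_cons_rcv (p q m P Q : ℕ) (l : List Ev) :
    recvs (Ev.rcv p q m :: l) P Q =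
      if p = P ∧ q = Q then m :: recvs l P Q else recvs l P Q := by
  simp only [recvs, List.filterMap_cons]
  split_ifs <;> simp_all

lemma recvs_cons_snd (p q m P Q : ℕ) (l : List Ev) :
    recvs (Ev.snd p q m :: l) P Q = recvs l P Q := by
  simp [recvs, List.filterMap_cons]

lemma sends_append (a b : List Ev) (P Q : ℕ) :
    sends (a ++ b) P Q = sends a P Q ++ sends b P Q := List.filterMap_append

lemma recvs_append (a b : List Ev) (P Q : ℕ) :
    recvs (a ++ b) P Q = recvs a P Q ++ recvs b P Q := List.filterMap_append

lemma sends_replicate_snd (n p q m P Q : ℕ) :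
    sends (List.replicate n (Ev.snd p q m)) P Q =
      if p = P ∧ q = Q then List.replicate n m else [] := by
  induction n with
  | zero => simp [sends_nil]
  | succ k ih => simp only [List.replicate_succ, sends_cons_snd, ih]; split_ifs <;> simp_all

lemma recvs_replicate_rcv (n p q m P Q : ℕ) :
    recvs (List.replicate n (Ev.rcv p q m)) P Q =
      if p = P ∧ q = Q then List.replicate n m else [] := by
  induction n with
  | zero => simp [recvs_nil]
  | succ k ih => simp only [List.replicate_succ, recvs_cons_rcv, ih]; split_ifs <;> simp_all

lemma sends_replicate_rcv (n p q m P Q : ℕ) :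
    sends (List.replicate n (Ev.rcv p q m)) P Q = [] := by
  induction n with
  | zero => rfl
  | succ k ih => simp [List.replicate_succ, sends_cons_rcv, ih]

lemma recvs_replicate_snd (n p q m P Q : ℕ) :
    recvs (List.replicate n (Ev.snd p q m)) P Q = [] := by
  induction n with
  | zero => rfl
  | succ k ih => simp [List.replicate_succ, recvs_cons_snd, ih]

def wn (p q n : ℕ) : List Ev :=
  (List.replicate n [Ev.snd p q 0, Ev.rcv p q 0]).flatten ++
    [Ev.snd p q 1, Ev.rcv p q 1, Ev.snd q p 2, Ev.rcv q p 2]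

lemma wn_zero (p q : ℕ) :
    wn p q 0 = [Ev.snd p q 1, Ev.rcv p q 1, Ev.snd q p 2, Ev.rcv q p 2] := rfl

lemma wn_succ (p q n : ℕ) :
    wn p q (n+1) = Ev.snd p q 0 :: Ev.rcv p q 0 :: wn p q n := by
  simp [wn, List.replicate_succ]

lemma prefix4 {α : Type*} {a b c d : α} {u : List α} (h : u <+: [a,b,c,d]) :
    u = [] ∨ u = [a] ∨ u = [a,b] ∨ u = [a,b,c] ∨ u = [a,b,c,d] := by
  simp only [List.prefix_cons_iff, List.prefix_nil] at h
  rcases h with rfl | ⟨t, rfl, rfl | ⟨t, rfl, rfl | ⟨t, rfl, rfl | ⟨t, rfl, rfl⟩⟩⟩⟩ <;> simp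

lemma cc_w (p q : ℕ) (hpq : p ≠ q) : ∀ n, channelCompliant (wn p q n) := by
  intro n
  induction n with
  | zero =>
    intro u hu A B
    rw [wn_zero] at hu
    rcases prefix4 hu with rfl | rfl | rfl | rfl | rfl <;>
      simp only [sends_cons_snd, sends_cons_rcv, recvs_cons_snd, recvs_cons_rcv,
        sends_nil, recvs_nil] <;>
      (try split_ifs) <;> simp_all
  | succ k ih =>
    intro u hu A B
    rw [wn_succ] at hu
    rcases List.prefix_cons_iff.mp hu with rfl | ⟨t, rfl, ht⟩
    · simp [recvs_nil]
    rcases List.prefix_cons_iff.mp ht with rfl | ⟨t2, rfl, ht2⟩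
    · simp [sends_cons_snd, recvs_cons_snd, recvs_nil]
    · simp only [sends_cons_snd, sends_cons_rcv, recvs_cons_snd, recvs_cons_rcv]
      split_ifs with h
      · exact List.cons_prefix_cons.mpr ⟨rfl, ih t2 ht2 A B⟩
      · exact ih t2 ht2 A B

lemma hd_w (p q : ℕ) (hpq : p ≠ q) : ∀ n, halfDuplex (wn p q n) := by
  intro n
  induction n with
  | zero =>
    intro u hu A B
    rw [wn_zero] at hu
    rcases prefix4 hu with rfl | rfl | rfl | rfl | rfl <;>
      simp only [sends_cons_snd, sends_cons_rcv, recvs_cons_snd, recvs_cons_rcv,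
        sends_nil, recvs_nil] <;>
      (try split_ifs) <;> simp_all <;> try omega
  | succ k ih =>
    intro u hu A B
    rw [wn_succ] at hu
    rcases List.prefix_cons_iff.mp hu with rfl | ⟨t, rfl, ht⟩
    · simp [recvs_nil, sends_nil]
    rcases List.prefix_cons_iff.mp ht with rfl | ⟨t2, rfl, ht2⟩
    · simp only [sends_cons_snd, recvs_cons_snd, sends_nil, recvs_nil]
      (try split_ifs) <;> simp_all <;> try omega
    · simp only [sends_cons_snd, sends_cons_rcv, recvs_cons_snd, recvs_cons_rcv]
      rcases ih t2 ht2 A B with h | h <;>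
        [left; right] <;> split_ifs <;> simp_all

lemma bd_w (p q : ℕ) (hpq : p ≠ q) : ∀ n, bounded 1 (wn p q n) := by
  intro n
  induction n with
  | zero =>
    intro u hu A B
    rw [wn_zero] at hu
    rcases prefix4 hu with rfl | rfl | rfl | rfl | rfl <;>
      simp only [sends_cons_snd, sends_cons_rcv, recvs_cons_snd, recvs_cons_rcv,
        sends_nil, recvs_nil] <;>
      (try split_ifs) <;> simp_all <;> try omega
  | succ k ih =>
    intro u hu A B
    rw [wn_succ] at hu
    rcases List.prefix_cons_iff.mp hu with rfl | ⟨t, rfl, ht⟩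
    · simp [recvs_nil, sends_nil]
    rcases List.prefix_cons_iff.mp ht with rfl | ⟨t2, rfl, ht2⟩
    · simp only [sends_cons_snd, recvs_cons_snd, sends_nil, recvs_nil]
      (try split_ifs) <;> simp
    · have := ih t2 ht2 A B
      simp only [sends_cons_snd, sends_cons_rcv, recvs_cons_snd, recvs_cons_rcv]
      (try split_ifs) <;> simp_all <;> try omega

lemma cp_w (p q : ℕ) (hpq : p ≠ q) : ∀ n, complete (wn p q n) := by
  intro n
  induction n with
  | zero =>
    intro A B
    rw [wn_zero]
    simp only [sends_cons_snd, sends_cons_rcv, recvs_cons_snd, recvs_cons_rcv,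
      sends_nil, recvs_nil] <;> ((try split_ifs) <;> simp_all)
  | succ k ih =>
    intro A B
    rw [wn_succ]
    simp only [sends_cons_snd, sends_cons_rcv, recvs_cons_snd, recvs_cons_rcv]
    have := ih A B
    (try split_ifs) <;> simp_all

lemma wn_len (p q n : ℕ) : (wn p q n).length = 2*n+4 := by
  induction n with
  | zero => rfl
  | succ k ih => rw [wn_succ]; simp only [List.length_cons, ih]; omega

lemma counts (p q : ℕ) (hpq : p ≠ q) :
    ∀ n k, (sends ((wn p q n).take k) p q).length = (min k (2*n+2) + 1)/2
      ∧ (recvs ((wn p q n).take k) p q).length = min k (2*n+2) / 2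
      ∧ (sends ((wn p q n).take k) q p).length = (if 2*n+3 ≤ k then 1 else 0)
      ∧ (recvs ((wn p q n).take k) q p).length = (if 2*n+4 ≤ k then 1 else 0) := by
  have hqp : q ≠ p := fun h => hpq h.symm
  intro n
  induction n with
  | zero =>
    intro k
    rw [wn_zero]
    match k with
    | 0 => simp [sends_nil, recvs_nil]
    | 1 => simp [sends_cons_snd, recvs_cons_snd, hpq, hqp, sends_nil, recvs_nil]
    | 2 => simp [sends_cons_snd, recvs_cons_snd, sends_cons_rcv, recvs_cons_rcv,
            hpq, hqp, sends_nil, recvs_nil]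
    | 3 => simp [sends_cons_snd, recvs_cons_snd, sends_cons_rcv, recvs_cons_rcv,
            hpq, hqp, sends_nil, recvs_nil]
    | (k+4) =>
      rw [List.take_of_length_le (by simp)]
      simp [sends_cons_snd, recvs_cons_snd, sends_cons_rcv, recvs_cons_rcv,
        hpq, hqp, sends_nil, recvs_nil]
  | succ m ih =>
    intro k
    rw [wn_succ]
    match k with
    | 0 => simp [sends_nil, recvs_nil]
    | 1 => simp [sends_cons_snd, recvs_cons_snd, hpq, hqp, sends_nil, recvs_nil]
    | (k+2) =>
      obtain ⟨c1, c2, c3, c4⟩ := ih k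
      simp only [List.take_succ_cons]
      refine ⟨?_, ?_, ?_, ?_⟩
      · rw [sends_cons_snd, sends_cons_rcv, if_pos ⟨rfl, rfl⟩]
        simp only [List.length_cons, c1]; omega
      · rw [recvs_cons_snd, recvs_cons_rcv, if_pos ⟨rfl, rfl⟩]
        simp only [List.length_cons, c2]; omega
      · rw [sends_cons_snd, sends_cons_rcv, if_neg (fun h => hpq h.1), c3]
        split_ifs <;> omega
      · rw [recvs_cons_snd, recvs_cons_rcv, if_neg (fun h => hpq h.1), c4]
        split_ifs <;> omega

lemma wn_get_lo (p q : ℕ) : ∀ n i, i < 2*n →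
    (wn p q n)[i]? = some (if i % 2 = 0 then Ev.snd p q 0 else Ev.rcv p q 0) := by
  intro n
  induction n with
  | zero => omega
  | succ m ih =>
    intro i hi
    rw [wn_succ]
    match i with
    | 0 => simp
    | 1 => simp
    | (i+2) =>
      rw [List.getElem?_cons_succ, List.getElem?_cons_succ, ih i (by omega)]
      congr 1
      have : (i+2) % 2 = i % 2 := by omega
      rw [this]

lemma wn_get_hi (p q : ℕ) : ∀ n t, (wn p q n)[2*n+t]? =
    [Ev.snd p q 1, Ev.rcv p q 1, Ev.snd q p 2, Ev.rcv q p 2][t]? := by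
  intro n
  induction n with
  | zero =>
    intro t
    have h0 : 2*0+t = t := by omega
    rw [h0]; rfl
  | succ m ih =>
    intro t
    rw [wn_succ]
    have : 2*(m+1)+t = (2*m+t) + 1 + 1 := by omega
    rw [this, List.getElem?_cons_succ, List.getElem?_cons_succ, ih t]

lemma matches_adj (p q : ℕ) (hpq : p ≠ q) (n : ℕ) (A B i j : ℕ)
    (h : Matches (wn p q n) A B i j) : i % 2 = 0 ∧ j = i + 1 := by
  obtain ⟨hij, hjlen, ⟨m, hi, hj⟩, heq⟩ := h
  rw [wn_len] at hjlen
  have hlen := congrArg List.length heq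
  have hg0 : (wn p q n)[2*n]? = some (Ev.snd p q 1) := by
    simpa using wn_get_hi p q n 0
  have hg1 : (wn p q n)[2*n+1]? = some (Ev.rcv p q 1) := by
    simpa using wn_get_hi p q n 1
  have hg2 : (wn p q n)[2*n+2]? = some (Ev.snd q p 2) := by
    simpa using wn_get_hi p q n 2
  have hg3 : (wn p q n)[2*n+3]? = some (Ev.rcv q p 2) := by
    simpa using wn_get_hi p q n 3
  rcases (show i < 2*n ∨ i = 2*n ∨ i = 2*n+1 ∨ i = 2*n+2 ∨ i = 2*n+3 by omega)
    with hc | hc | hc | hc | hc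
  · -- i < 2n : cons send
    rw [wn_get_lo p q n i hc] at hi
    by_cases hpar : i % 2 = 0
    case neg => rw [if_neg hpar] at hi; simp at hi
    rw [if_pos hpar] at hi
    simp only [Option.some.injEq, Ev.snd.injEq] at hi
    obtain ⟨rfl, rfl, rfl⟩ := hi
    rcases (show j < 2*n ∨ j = 2*n ∨ j = 2*n+1 ∨ j = 2*n+2 ∨ j = 2*n+3 by omega)
      with hd | hd | hd | hd | hd
    · rw [wn_get_lo p q n j hd] at hj
      by_cases hqar : j % 2 = 0
      · rw [if_pos hqar] at hj; simp at hj
      · rw [if_neg hqar] at hj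
        have e1 := (counts p q hpq n (i+1)).1
        have e2 := (counts p q hpq n (j+1)).2.1
        rw [e1, e2] at hlen
        omega
    · subst hd; rw [hg0] at hj; simp at hj
    · subst hd; rw [hg1] at hj; simp at hj
    · subst hd; rw [hg2] at hj; simp at hj
    · subst hd; rw [hg3] at hj; simp at hj
  · -- i = 2n : nil send
    subst hc
    rw [hg0] at hi
    simp only [Option.some.injEq, Ev.snd.injEq] at hi
    obtain ⟨rfl, rfl, rfl⟩ := hi
    rcases (show j < 2*n ∨ j = 2*n ∨ j = 2*n+1 ∨ j = 2*n+2 ∨ j = 2*n+3 by omega)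
      with hd | hd | hd | hd | hd
    · rw [wn_get_lo p q n j hd] at hj
      by_cases hqar : j % 2 = 0
      · rw [if_pos hqar] at hj; simp at hj
      · rw [if_neg hqar] at hj; simp at hj
    · omega
    · subst hd; exact ⟨by omega, by omega⟩
    · subst hd; rw [hg2] at hj; simp at hj
    · subst hd; rw [hg3] at hj; simp at hj
  · subst hc; rw [hg1] at hi; simp at hi
  · -- i = 2n+2 : ack send
    subst hc
    rw [hg2] at hi
    simp only [Option.some.injEq, Ev.snd.injEq] at hi
    obtain ⟨rfl, rfl, rfl⟩ := hi
    have hd : j = 2*n+3 := by omega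
    subst hd
    exact ⟨by omega, by omega⟩
  · subst hc; rw [hg3] at hi; simp at hi

def blks (p q n : ℕ) : List (List Ev) :=
  List.replicate n [Ev.snd p q 0, Ev.rcv p q 0] ++
    [[Ev.snd p q 1, Ev.rcv p q 1], [Ev.snd q p 2, Ev.rcv q p 2]]

lemma blks_succ (p q n : ℕ) :
    blks p q (n+1) = [Ev.snd p q 0, Ev.rcv p q 0] :: blks p q n := by
  simp [blks, List.replicate_succ]

lemma blks_flatten (p q n : ℕ) : (blks p q n).flatten = wn p q n := by
  simp [blks, wn, List.flatten_append]

lemma blks_take_len (p q : ℕ) : ∀ n t,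
    ((blks p q n).take t).flatten.length = 2 * min t (n+2) := by
  intro n
  induction n with
  | zero =>
    intro t
    match t with
    | 0 => simp
    | 1 => simp [blks]
    | (t+2) =>
      rw [List.take_of_length_le (by simp [blks])]
      simp [blks]
  | succ m ih =>
    intro t
    rw [blks_succ]
    match t with
    | 0 => simp
    | (t+1) =>
      rw [List.take_succ_cons, List.flatten_cons, List.length_append, ih t]
      simp only [List.length_cons, List.length_nil]
      omega

lemma ksync (p q : ℕ) (hpq : p ≠ q) (n : ℕ) : kSynchronisable 1 (wn p q n) := by
  refine ⟨blks p q n, ?_, ?_, ?_, ?_⟩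
  · rw [blks_flatten]; exact cc_w p q hpq n
  · rw [blks_flatten]; intro X; rfl
  · intro b hb
    simp only [blks, List.mem_append, List.mem_replicate, List.mem_cons,
      List.not_mem_nil, or_false] at hb
    rcases hb with ⟨-, rfl⟩ | rfl | rfl
    · exact ⟨[Ev.snd p q 0], [Ev.rcv p q 0], rfl, by simp, by simp,
        by intro e he; simp at he; subst he; trivial,
        by intro e he; simp at he; subst he; trivial⟩
    · exact ⟨[Ev.snd p q 1], [Ev.rcv p q 1], rfl, by simp, by simp,
        by intro e he; simp at he; subst he; trivial,
        by intro e he; simp at he; subst he; trivial⟩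
    · exact ⟨[Ev.snd q p 2], [Ev.rcv q p 2], rfl, by simp, by simp,
        by intro e he; simp at he; subst he; trivial,
        by intro e he; simp at he; subst he; trivial⟩
  · intro A B i j hM
    rw [blks_flatten] at hM
    have hjl : j < 2*n+4 := by rw [← wn_len p q n]; exact hM.2.1
    obtain ⟨hpar, rfl⟩ := matches_adj p q hpq n A B i j hM
    exact ⟨i/2, by rw [blks_take_len]; omega, by rw [blks_take_len]; omega⟩

def un (p q n : ℕ) : List Ev :=
  List.replicate n (Ev.snd p q 0) ++ [Ev.snd p q 1] ++
    List.replicate n (Ev.rcv p q 0) ++ [Ev.rcv p q 1, Ev.snd q p 2, Ev.rcv q p 2]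

lemma flatten_rep_one {α : Type*} (n : ℕ) (x : α) :
    (List.replicate n [x]).flatten = List.replicate n x := by
  induction n with
  | zero => rfl
  | succ m ih => simp [List.replicate_succ, ih]

lemma msc_wu (p q : ℕ) (hpq : p ≠ q) (n : ℕ) : sameMSC (wn p q n) (un p q n) := by
  intro X
  have hqp : q ≠ p := fun h => hpq h.symm
  by_cases h1 : p = X
  · subst h1
    simp [wn, un, proj, List.filter_append, List.filter_flatten, List.map_replicate,
      List.filter_replicate, actor, hqp, flatten_rep_one]
  · by_cases h2 : q = X
    · subst h2
      simp [wn, un, proj, List.filter_append, List.filter_flatten, List.map_replicate,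
        List.filter_replicate, actor, h1, flatten_rep_one]
    · simp [wn, un, proj, List.filter_append, List.filter_flatten, List.map_replicate,
        List.filter_replicate, actor, h1, h2, flatten_rep_one]

lemma notbd_u (p q : ℕ) (hpq : p ≠ q) (n : ℕ) (hn : 1 ≤ n) :
    ¬ bounded n (un p q n) := by
  intro hb
  have hpre : (List.replicate n (Ev.snd p q 0) ++ [Ev.snd p q 1]) <+: un p q n := by
    have hu : un p q n = (List.replicate n (Ev.snd p q 0) ++ [Ev.snd p q 1]) ++
        (List.replicate n (Ev.rcv p q 0) ++ [Ev.rcv p q 1, Ev.snd q p 2, Ev.rcv q p 2]) := by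
      simp [un]
    rw [hu]
    exact List.prefix_append _ _
  have h := hb _ hpre p q
  rw [sends_append, sends_replicate_snd, if_pos ⟨rfl, rfl⟩, sends_cons_snd,
    if_pos ⟨rfl, rfl⟩, recvs_append, recvs_replicate_snd, recvs_cons_snd] at h
  simp only [sends_nil, recvs_nil, List.length_append, List.length_replicate,
    List.length_cons, List.length_nil] at h
  omega

lemma prefix_append_cases {α : Type*} {p a b : List α} (h : p <+: a ++ b) :
    p <+: a ∨ ∃ r, p = a ++ r ∧ r <+: b := by
  rcases le_or_gt p.length a.length with hl | hl
  · exact Or.inl (List.prefix_of_prefix_length_le h (List.prefix_append a b) hl)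
  · have ha : a <+: p :=
      List.prefix_of_prefix_length_le (List.prefix_append a b) h (by omega)
    obtain ⟨r, rfl⟩ := ha
    exact Or.inr ⟨r, rfl, (List.prefix_append_right_inj a).mp h⟩

lemma hd_u (p q : ℕ) (hpq : p ≠ q) (n : ℕ) : halfDuplex (un p q n) := by
  have hqp : q ≠ p := fun h => hpq h.symm
  intro v hv A B
  have hsplit : un p q n = (List.replicate n (Ev.snd p q 0) ++ [Ev.snd p q 1] ++
      List.replicate n (Ev.rcv p q 0) ++ [Ev.rcv p q 1]) ++
      [Ev.snd q p 2, Ev.rcv q p 2] := by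
    simp [un]
  rw [hsplit] at hv
  rcases prefix_append_cases hv with h1 | ⟨r, rfl, hr⟩
  · -- v lies in the (p,q)-only part
    have hmem : ∀ e ∈ v, e = Ev.snd p q 0 ∨ e = Ev.snd p q 1 ∨
        e = Ev.rcv p q 0 ∨ e = Ev.rcv p q 1 := by
      intro e he
      have hm := h1.subset he
      simp only [List.mem_append, List.mem_replicate, List.mem_singleton,
        List.mem_cons, List.not_mem_nil, or_false] at hm
      tauto
    by_cases hc : p = A ∧ q = B
    · right
      obtain ⟨rfl, rfl⟩ := hc
      have hs : sends v q p = [] := by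
        rw [sends, List.filterMap_eq_nil_iff]
        intro e he
        rcases hmem e he with rfl | rfl | rfl | rfl <;> simp [hqp]
      have hr' : recvs v q p = [] := by
        rw [recvs, List.filterMap_eq_nil_iff]
        intro e he
        rcases hmem e he with rfl | rfl | rfl | rfl <;> simp [hqp]
      rw [hs, hr']
    · left
      have hs : sends v A B = [] := by
        rw [sends, List.filterMap_eq_nil_iff]
        intro e he
        rcases hmem e he with rfl | rfl | rfl | rfl <;> simp [hc]
      have hr' : recvs v A B = [] := by
        rw [recvs, List.filterMap_eq_nil_iff]
        intro e he
        rcases hmem e he with rfl | rfl | rfl | rfl <;> simp [hc]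
      rw [hs, hr']
  · -- v = A1 ++ r with r a prefix of the ack part
    have hrc : r = [] ∨ r = [Ev.snd q p 2] ∨ r = [Ev.snd q p 2, Ev.rcv q p 2] := by
      rcases List.prefix_cons_iff.mp hr with rfl | ⟨t, rfl, ht⟩
      · exact Or.inl rfl
      rcases List.prefix_cons_iff.mp ht with rfl | ⟨t2, rfl, ht2⟩
      · exact Or.inr (Or.inl rfl)
      · rw [List.prefix_nil] at ht2
        subst ht2
        exact Or.inr (Or.inr rfl)
    by_cases hc : q = A ∧ p = B
    · right
      obtain ⟨rfl, rfl⟩ := hc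
      -- channel (B,A) = (p,q)
      have hrs : sends r p q = [] := by
        rcases hrc with rfl | rfl | rfl <;>
          simp [sends_nil, sends_cons_snd, sends_cons_rcv, hqp]
      have hrr : recvs r p q = [] := by
        rcases hrc with rfl | rfl | rfl <;>
          simp [recvs_nil, recvs_cons_snd, recvs_cons_rcv, hqp]
      rw [sends_append, recvs_append, hrs, hrr]
      simp only [List.append_nil]
      simp [sends_append, recvs_append, sends_replicate_snd, recvs_replicate_snd,
        sends_replicate_rcv, recvs_replicate_rcv, sends_cons_snd, sends_cons_rcv,
        recvs_cons_snd, recvs_cons_rcv, sends_nil, recvs_nil]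
    · left
      have hrs : sends r A B = [] := by
        rcases hrc with rfl | rfl | rfl <;>
          simp [sends_nil, sends_cons_snd, sends_cons_rcv, hc]
      have hrr : recvs r A B = [] := by
        rcases hrc with rfl | rfl | rfl <;>
          simp [recvs_nil, recvs_cons_snd, recvs_cons_rcv, hc]
      rw [sends_append, recvs_append, hrs, hrr]
      simp only [List.append_nil]
      simp only [sends_append, recvs_append, sends_replicate_snd, recvs_replicate_snd,
        sends_replicate_rcv, recvs_replicate_rcv, sends_cons_snd, sends_cons_rcv,
        recvs_cons_snd, recvs_cons_rcv, sends_nil, recvs_nil]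
      split_ifs <;> simp

/-- the list protocol. Messages: 0 = cons, 1 = nil, 2 = ack.
    w n is complete, channel-compliant, half-duplex, 1-bounded, and
    1-synchronisable; u n induces the same MSC, is not n-bounded (n ≥ 1),
    but is half-duplex. -/
theorem list_protocol_example (P Q : ℕ) (hPQ : P ≠ Q) (n : ℕ) :
    let w : List Ev := (List.replicate n [Ev.snd P Q 0, Ev.rcv P Q 0]).flatten ++
      [Ev.snd P Q 1, Ev.rcv P Q 1, Ev.snd Q P 2, Ev.rcv Q P 2]
    let u : List Ev := List.replicate n (Ev.snd P Q 0) ++ [Ev.snd P Q 1] ++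
      List.replicate n (Ev.rcv P Q 0) ++ [Ev.rcv P Q 1, Ev.snd Q P 2, Ev.rcv Q P 2]
    complete w ∧ channelCompliant w ∧ halfDuplex w ∧ bounded 1 w ∧
    kSynchronisable 1 w ∧ sameMSC w u ∧
    (1 ≤ n → ¬ bounded n u) ∧ halfDuplex u := by
  intro w u
  exact ⟨cp_w P Q hPQ n, cc_w P Q hPQ n, hd_w P Q hPQ n, bd_w P Q hPQ n,
    ksync P Q hPQ n, msc_wu P Q hPQ n, fun hn => notbd_u P Q hPQ n hn,
    hd_u P Q hPQ n⟩
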